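/- Let G = T_1 × ... × T_r where each T_i is a finite nonabelian simple group, such that for each i, T_i is not a section of ∏_{j≠i} T_j, and such that no T_i admits a nontrivial factorisation. If G = HK with H and K proper subgroups of G, then Core_G(H) ≠ 1 and Core_G(K) ≠ 1. -/

import Mathlib

def IsSectionOf (S X : Type*) [Group S] [Group X] : Prop :=
  ∃ (H : Subgroup X) (f : H →* S), Function.Surjective f

section Aux

variable {r : ℕ} (T : Fin r → Type*) [∀ i, Group (T i)]

/-- The homomorphism deleting the `i`-th coordinate. -/
def restHom (i : Fin r) : (∀ j, T j) →* (∀ j : {j : Fin r // j ≠ i}, T j.1) :=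
  Pi.monoidHom fun j => Pi.evalMonoidHom T j.1

variable {T}

lemma mem_ker_restHom {i : Fin r} {g : ∀ j, T j} :
    g ∈ (restHom T i).ker ↔ ∀ j, j ≠ i → g j = 1 := by
  constructor
  · intro h j hj
    have := congrFun (MonoidHom.mem_ker.mp h) ⟨j, hj⟩
    simpa [restHom, Pi.monoidHom] using this
  · intro h
    rw [MonoidHom.mem_ker]
    funext j
    simpa [restHom, Pi.monoidHom] using h j.1 j.2

lemma mulSingle_mem_ker_restHom (i : Fin r) (x : T i) :
    Pi.mulSingle i x ∈ (restHom T i).ker :=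
  mem_ker_restHom.mpr fun j hj => Pi.mulSingle_eq_of_ne hj x

lemma key (hsimple : ∀ i, IsSimpleGroup (T i))
    (hsec : ∀ i, ¬ IsSectionOf (T i) (∀ j : {j : Fin r // j ≠ i}, T j.1))
    (W : Subgroup (∀ i, T i)) (i : Fin r)
    (hW : ∀ t : T i, ∃ w ∈ W, w i = t) :
    (restHom T i).ker ≤ W := by
  classical
  set L : Subgroup (∀ j, T j) := W ⊓ (restHom T i).ker with hL
  set S : Subgroup (T i) := L.map (Pi.evalMonoidHom T i) with hS
  have hSnormal : S.Normal := by
    constructor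
    intro s hs t
    obtain ⟨l, hl, rfl⟩ := hs
    obtain ⟨w, hw, hwi⟩ := hW t
    refine ⟨w * l * w⁻¹, ⟨W.mul_mem (W.mul_mem hw hl.1) (W.inv_mem hw), ?_⟩, ?_⟩
    · exact (MonoidHom.normal_ker _).conj_mem l hl.2 w
    · simp [hwi]
  rcases (hsimple i).eq_bot_or_eq_top_of_normal S hSnormal with hSbot | hStop
  · -- get a contradiction with hsec
    exfalso
    have hinj : Function.Injective ((restHom T i).comp W.subtype) := by
      rw [injective_iff_map_eq_one]
      rintro ⟨w, hw⟩ h1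
      have hker : w ∈ (restHom T i).ker := h1
      have hLmem : w ∈ L := ⟨hw, hker⟩
      have : w i ∈ S := ⟨w, hLmem, rfl⟩
      rw [hSbot, Subgroup.mem_bot] at this
      have : w = 1 := by
        funext j
        by_cases hj : j = i
        · subst hj; exact this
        · exact mem_ker_restHom.mp hker j hj
      exact Subtype.ext this
    apply hsec i
    refine ⟨((restHom T i).comp W.subtype).range,
      ((Pi.evalMonoidHom T i).comp W.subtype).comp
        (MulEquiv.symm (MonoidHom.ofInjective hinj)).toMonoidHom, ?_⟩
    intro t
    obtain ⟨w, hw, hwi⟩ := hW t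
    refine ⟨MonoidHom.ofInjective hinj ⟨w, hw⟩, ?_⟩
    simp [hwi]
  · -- full factor contained in W
    intro g hg
    have : g i ∈ S := hStop ▸ Subgroup.mem_top (g i)
    obtain ⟨l, hl, hli⟩ := this
    have : g = l := by
      funext j
      by_cases hj : j = i
      · subst hj; exact hli.symm
      · rw [mem_ker_restHom.mp hg j hj, mem_ker_restHom.mp hl.2 j hj]
    exact this ▸ hl.1

lemma full_of_all (W : Subgroup (∀ i, T i))
    (h : ∀ i, (restHom T i).ker ≤ W) : W = ⊤ := by
  classical
  rw [Subgroup.eq_top_iff']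
  intro g
  rw [← Finset.noncommProd_mulSingle g]
  exact W.noncommProd_mem _ fun i _ => h i (mulSingle_mem_ker_restHom i (g i))

end Aux

theorem stmt2 {r : ℕ} (T : Fin r → Type*) [∀ i, Group (T i)] [∀ i, Finite (T i)]
    (hsimple : ∀ i, IsSimpleGroup (T i))
    (hnonab : ∀ i, ∃ a b : T i, a * b ≠ b * a)
    (hsec : ∀ i, ¬ IsSectionOf (T i) (∀ j : {j : Fin r // j ≠ i}, T j.1))
    (hfact : ∀ i, ¬ ∃ A B : Subgroup (T i), A ≠ ⊤ ∧ B ≠ ⊤ ∧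
      ∀ x : T i, ∃ a ∈ A, ∃ b ∈ B, x = a * b)
    (H K : Subgroup (∀ i, T i)) (hH : H ≠ ⊤) (hK : K ≠ ⊤)
    (hHK : ∀ g : ∀ i, T i, ∃ h ∈ H, ∃ k ∈ K, g = h * k) :
    H.normalCore ≠ ⊥ ∧ K.normalCore ≠ ⊥ := by
  classical
  have hproj : ∀ i, (∀ t : T i, ∃ w ∈ H, w i = t) ∨ (∀ t : T i, ∃ w ∈ K, w i = t) := by
    intro i
    by_contra hc
    push_neg at hc
    obtain ⟨⟨t₁, ht₁⟩, ⟨t₂, ht₂⟩⟩ := hc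
    apply hfact i
    refine ⟨H.map (Pi.evalMonoidHom T i), K.map (Pi.evalMonoidHom T i), ?_, ?_, ?_⟩
    · intro htop
      have : t₁ ∈ H.map (Pi.evalMonoidHom T i) := htop ▸ Subgroup.mem_top t₁
      obtain ⟨h, hh, hhi⟩ := this
      exact ht₁ h hh hhi
    · intro htop
      have : t₂ ∈ K.map (Pi.evalMonoidHom T i) := htop ▸ Subgroup.mem_top t₂
      obtain ⟨k, hk, hki⟩ := this
      exact ht₂ k hk hki
    · intro x
      obtain ⟨h, hh, k, hk, hx⟩ := hHK (Pi.mulSingle i x)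
      refine ⟨h i, ⟨h, hh, rfl⟩, k i, ⟨k, hk, rfl⟩, ?_⟩
      have := congrFun hx i
      simpa using this
  have hne : ∀ (W : Subgroup (∀ i, T i)) (i : Fin r),
      (restHom T i).ker ≤ W → W.normalCore ≠ ⊥ := by
    intro W i hle hbot
    obtain ⟨a, ha⟩ := exists_ne (1 : T i)
    have hmem : Pi.mulSingle i a ∈ W.normalCore := by
      have := Subgroup.normal_le_normalCore.mpr
        (show (restHom T i).ker ≤ W from hle)
      exact this (mulSingle_mem_ker_restHom i a)
    rw [hbot, Subgroup.mem_bot] at hmem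
    exact ha (by simpa using congrFun hmem i)
  constructor
  · have : ∃ i, ∀ t : T i, ∃ w ∈ H, w i = t := by
      by_contra hcon
      push_neg at hcon
      apply hK
      apply full_of_all
      intro i
      obtain ⟨t, ht⟩ := hcon i
      rcases hproj i with h | h
      · exact absurd (h t) (by push_neg; exact ht)
      · exact key hsimple hsec K i h
    obtain ⟨i, hi⟩ := this
    exact hne H i (key hsimple hsec H i hi)
  · have : ∃ i, ∀ t : T i, ∃ w ∈ K, w i = t := by
      by_contra hcon
      push_neg at hcon
      apply hH
      apply full_of_all
      intro i
      obtain ⟨t, ht⟩ := hcon i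
      rcases hproj i with h | h
      · exact key hsimple hsec H i h
      · exact absurd (h t) (by push_neg; exact ht)
    obtain ⟨i, hi⟩ := this
    exact hne K i (key hsimple hsec K i hi)
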